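/- For every odd prime p, every k ∈ ZMod p with k ≠ 0, every i ∈ (ZMod p) ∪ {∞} and every j ∈ ZMod p, the matrix P_{k;i,j} := (1/p) ∑_{a ∈ A_{i,j}} ρ_k(a) equals the rank-one orthogonal projection |ψ_{k;i,j}⟩⟨ψ_{k;i,j}| onto the span of the unit vector ψ_{k;i,j}; that is, the (μ,ν) entry of P_{k;i,j} equals (ψ_{k;i,j})_μ · conj((ψ_{k;i,j})_ν). -/

import Mathlib

@[ext]
structure Heis (p : ℕ) where
  x : ZMod p
  y : ZMod p
  z : ZMod p

namespace Heis

variable {p : ℕ}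

instance : Mul (Heis p) := ⟨fun a b => ⟨a.x + b.x, a.y + b.y, a.z + b.z + a.x * b.y⟩⟩
instance : One (Heis p) := ⟨⟨0, 0, 0⟩⟩
instance : Inv (Heis p) := ⟨fun a => ⟨-a.x, -a.y, a.x * a.y - a.z⟩⟩

lemma mul_def (a b : Heis p) :
    a * b = ⟨a.x + b.x, a.y + b.y, a.z + b.z + a.x * b.y⟩ := rfl
lemma one_def : (1 : Heis p) = ⟨0, 0, 0⟩ := rfl
lemma inv_def (a : Heis p) : a⁻¹ = ⟨-a.x, -a.y, a.x * a.y - a.z⟩ := rfl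

instance instGroup : Group (Heis p) where
  mul_assoc a b c := by ext <;> simp [mul_def] <;> ring
  one_mul a := by ext <;> simp [mul_def, one_def]
  mul_one a := by ext <;> simp [mul_def, one_def]
  inv_mul_cancel a := by ext <;> simp [mul_def, inv_def, one_def]

end Heis

/-- The cyclic subgroups A_{i,j} of order p; `A p (some i) j = ⟨(1,i,j)⟩`,
`A p none j = ⟨(0,1,j)⟩`. -/
def A (p : ℕ) : Option (ZMod p) → ZMod p → Subgroup (Heis p)
  | some i, j => Subgroup.zpowers (⟨1, i, j⟩ : Heis p)
  | none, j => Subgroup.zpowers (⟨0, 1, j⟩ : Heis p)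

/-- `ω^v = exp(2πi·v.val/p)` for `v : ZMod p`, where `ω = exp(2πi/p)`. -/
noncomputable def omegaPow (p : ℕ) (v : ZMod p) : ℂ :=
  Complex.exp (2 * Real.pi * Complex.I * (v.val : ℂ) / p)

/-- The degree-`p` representation `ρ_k` of `H_p` (`k ≠ 0`), as a matrix-valued function:
the `(a,b)` entry of `ρ_k(x,y,z)` is `ω^{k(z+ya)}` if `b = a + x`, and `0` otherwise. -/
noncomputable def rho (p : ℕ) (k : ZMod p) (g : Heis p) :
    Matrix (ZMod p) (ZMod p) ℂ :=
  Matrix.of fun a b => if b = a + g.x then omegaPow p (k * (g.z + g.y * a)) else 0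

/-- The unit vectors `ψ_{k;i,j} ∈ ℂ^{ZMod p}`:
`ψ_{k;i,j} = p^{-1/2} ∑_μ ω^{-k((μ(μ-1)/2)i + μj)} e_μ` for `i ∈ ZMod p`, and
`ψ_{k;∞,j} = e_{-j}`. -/
noncomputable def psi (p : ℕ) (k : ZMod p) : Option (ZMod p) → ZMod p → ZMod p → ℂ
  | some i, j => fun μ =>
      ((Real.sqrt p : ℝ) : ℂ)⁻¹ *
        omegaPow p (-(k * (μ * (μ - 1) * (2 : ZMod p)⁻¹ * i + μ * j)))
  | none, j => fun μ => if μ = -j then 1 else 0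


section aux
variable (p : ℕ) [NeZero p]

noncomputable def zeta (p : ℕ) : ℂ := Complex.exp (2 * Real.pi * Complex.I / p)

lemma zeta_pow_p : zeta p ^ p = 1 := by
  have hp : (p : ℂ) ≠ 0 := by exact_mod_cast (NeZero.ne p)
  rw [zeta, ← Complex.exp_nat_mul]
  rw [show (p : ℂ) * (2 * Real.pi * Complex.I / p) = 2 * Real.pi * Complex.I by
    field_simp]
  exact Complex.exp_two_pi_mul_I

lemma omegaPow_eq (v : ZMod p) : omegaPow p v = zeta p ^ v.val := by
  rw [zeta, ← Complex.exp_nat_mul, omegaPow]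
  ring_nf

lemma zeta_pow_mod (n : ℕ) : zeta p ^ (n % p) = zeta p ^ n := by
  conv_rhs => rw [← Nat.div_add_mod n p]
  rw [pow_add, pow_mul, zeta_pow_p, one_pow, one_mul]

lemma omegaPow_add (u v : ZMod p) :
    omegaPow p (u + v) = omegaPow p u * omegaPow p v := by
  rw [omegaPow_eq, omegaPow_eq, omegaPow_eq, ← pow_add, ZMod.val_add, zeta_pow_mod]

lemma omegaPow_zero : omegaPow p (0 : ZMod p) = 1 := by
  rw [omegaPow_eq, ZMod.val_zero, pow_zero]

lemma abs_omegaPow (v : ZMod p) : ‖omegaPow p v‖ = 1 := by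
  rw [omegaPow, show 2 * Real.pi * Complex.I * (v.val : ℂ) / p
      = ((2 * Real.pi * v.val / p : ℝ) : ℂ) * Complex.I by push_cast; ring]
  exact Complex.norm_exp_ofReal_mul_I _

lemma conj_omegaPow (v : ZMod p) :
    (starRingEnd ℂ) (omegaPow p v) = omegaPow p (-v) := by
  have h1 : omegaPow p v * omegaPow p (-v) = 1 := by
    rw [← omegaPow_add]; simp [omegaPow_zero]
  have h2 : (starRingEnd ℂ) (omegaPow p v) * omegaPow p v = 1 := by
    rw [mul_comm, Complex.mul_conj, ← Complex.sq_norm, abs_omegaPow]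
    norm_num
  calc (starRingEnd ℂ) (omegaPow p v)
      = (starRingEnd ℂ) (omegaPow p v) * (omegaPow p v * omegaPow p (-v)) := by
        rw [h1, mul_one]
    _ = omegaPow p (-v) := by rw [← mul_assoc, h2, one_mul]

lemma sum_omegaPow_univ (hp1 : 1 < p) : ∑ n : ZMod p, omegaPow p n = 0 := by
  have : ∑ n : ZMod p, omegaPow p n = ∑ t ∈ Finset.range p, zeta p ^ t := by
    rw [Finset.sum_nbij' (i := fun (n : ZMod p) => n.val)
      (j := fun (t : ℕ) => (t : ZMod p))]
    · intro a _; exact Finset.mem_range.mpr (ZMod.val_lt a)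
    · intro t _; exact Finset.mem_univ _
    · intro a _; simp [ZMod.natCast_val, ZMod.cast_id]
    · intro t ht; exact ZMod.val_cast_of_lt (Finset.mem_range.mp ht)
    · intro a _; rw [omegaPow_eq]
  rw [this]
  exact (Complex.isPrimitiveRoot_exp p (NeZero.ne p)).geom_sum_eq_zero hp1

lemma sum_omegaPow_mul (hp : p.Prime) (c : ZMod p) (hc : c ≠ 0) :
    ∑ n : ZMod p, omegaPow p (c * n) = 0 := by
  haveI := Fact.mk hp
  rw [Fintype.sum_bijective (Equiv.mulLeft₀ c hc) (Equiv.mulLeft₀ c hc).bijective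
    (fun n => omegaPow p (c * n)) (fun n => omegaPow p n) (fun n => rfl)]
  exact sum_omegaPow_univ p hp.one_lt

end aux

section zp
variable {p : ℕ} [NeZero p] {G : Type*} [Group G] [DecidableEq G]

lemma pow_eq_of_hom (f : ZMod p → G) (hf : ∀ a b, f (a + b) = f a * f b)
    (hf0 : f 0 = 1) : ∀ m : ℤ, (f 1) ^ m = f (m : ZMod p) := by
  have hnat : ∀ n : ℕ, (f 1) ^ n = f (n : ZMod p) := by
    intro n; induction n with
    | zero => simp [hf0]
    | succ n ih => rw [pow_succ, ih, ← hf]; push_cast; ring_nf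
  have hinv : ∀ a, (f a)⁻¹ = f (-a) := by
    intro a
    have : f a * f (-a) = 1 := by rw [← hf]; simp [hf0]
    exact inv_eq_of_mul_eq_one_right this
  intro m
  cases m with
  | ofNat n => rw [Int.ofNat_eq_coe, zpow_natCast, hnat]; push_cast; ring_nf
  | negSucc n =>
      rw [zpow_negSucc, hnat, hinv]
      congr 1
      push_cast
      ring

lemma zpowers_coe_eq_image (f : ZMod p → G) (hf : ∀ a b, f (a + b) = f a * f b)
    (hf0 : f 0 = 1) :
    (Subgroup.zpowers (f 1) : Set G) = ↑(Finset.image f Finset.univ) := by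
  ext x
  simp only [SetLike.mem_coe, Subgroup.mem_zpowers_iff, Finset.coe_image,
    Finset.coe_univ, Set.image_univ, Set.mem_range]
  constructor
  · rintro ⟨m, rfl⟩; exact ⟨(m : ZMod p), (pow_eq_of_hom f hf hf0 m).symm⟩
  · rintro ⟨n, rfl⟩
    refine ⟨(n.val : ℤ), ?_⟩
    rw [pow_eq_of_hom f hf hf0]
    congr 1
    push_cast
    exact ZMod.natCast_rightInverse n

end zp

/-- For every odd prime `p`, every `k ≠ 0`, every `i ∈ ZMod p ∪ {∞}` and
every `j ∈ ZMod p`, the matrix `P_{k;i,j} := (1/p) ∑_{a ∈ A_{i,j}} ρ_k(a)` equals the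
rank-one orthogonal projection `|ψ_{k;i,j}⟩⟨ψ_{k;i,j}|` onto the span of the unit vector
`ψ_{k;i,j}`: the `(μ,ν)` entry of `P_{k;i,j}` is `(ψ_{k;i,j})_μ · conj((ψ_{k;i,j})_ν)`,
and `ψ_{k;i,j}` is a unit vector. -/
theorem heisenberg_averaged_projector (p : ℕ) [NeZero p] (hp : p.Prime) (ho : Odd p)
    (k : ZMod p) (hk : k ≠ 0) (i : Option (ZMod p)) (j : ZMod p) :
    ((p : ℂ)⁻¹ • ∑ᶠ a ∈ (A p i j : Set (Heis p)), rho p k a) =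
      Matrix.of (fun μ ν => psi p k i j μ * (starRingEnd ℂ) (psi p k i j ν)) ∧
    ∑ μ : ZMod p, ‖psi p k i j μ‖ ^ 2 = 1 := by
  classical
  haveI := Fact.mk hp
  have hp2 : p ≠ 2 := by rintro rfl; simpa [Nat.odd_iff] using ho
  have h2ne : (2 : ZMod p) ≠ 0 := by
    intro h
    have := (ZMod.natCast_eq_zero_iff 2 p).mp (by exact_mod_cast h)
    exact hp2 ((Nat.prime_dvd_prime_iff_eq hp Nat.prime_two).mp this)
  have h2 : (2 : ZMod p) * (2 : ZMod p)⁻¹ = 1 := mul_inv_cancel₀ h2ne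
  have hpC : (p : ℂ) ≠ 0 := by exact_mod_cast hp.ne_zero
  have hpR : (p : ℝ) ≠ 0 := by exact_mod_cast hp.ne_zero
  match i with
  | none =>
    set f : ZMod p → Heis p := fun n => ⟨0, n, n * j⟩ with hfdef
    have hf : ∀ a b, f (a + b) = f a * f b := by
      intro a b; ext <;> simp [hfdef, Heis.mul_def] <;> ring
    have hf0 : f 0 = 1 := by ext <;> simp [hfdef, Heis.one_def]
    have hf1 : f 1 = ⟨0, 1, j⟩ := by ext <;> simp [hfdef]
    have hset : (A p none j : Set (Heis p)) = ↑(Finset.image f Finset.univ) := by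
      rw [show A p none j = Subgroup.zpowers (f 1) by rw [hf1]; rfl]
      exact zpowers_coe_eq_image f hf hf0
    have hinj : ∀ x ∈ Finset.univ, ∀ y ∈ Finset.univ, f x = f y → x = y := by
      intro x _ y _ h; simpa [hfdef] using congrArg Heis.y h
    rw [hset, finsum_mem_coe_finset, Finset.sum_image hinj]
    constructor
    · ext μ ν
      simp only [Matrix.smul_apply, Matrix.sum_apply, Matrix.of_apply, rho,
        hfdef, psi, smul_eq_mul]
      by_cases hμν : ν = μ
      · subst hμν
        simp only [add_zero, if_pos rfl]
        have harg : ∀ n : ZMod p, k * (n * j + n * ν) = k * (j + ν) * n := by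
          intro n; ring
        simp_rw [harg]
        simp only [if_true]
        by_cases hν : ν = -j
        · have : k * (j + ν) = 0 := by rw [hν]; ring
          simp [this, omegaPow_zero, hν, Finset.sum_const, ZMod.card,
            mul_comm, inv_mul_cancel₀ hpC]
        · have hc : k * (j + ν) ≠ 0 := by
            refine mul_ne_zero hk fun h => hν ?_
            linear_combination h
          rw [sum_omegaPow_mul p hp _ hc]
          simp [hν]
      · have : ∀ n : ZMod p, ¬ (ν = μ + n) ∨ n ≠ 0 := by
          intro n; by_cases h : n = 0
          · left; subst h; simpa using hμν
          · right; exact h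
        have hz : ∀ n : ZMod p,
            (if ν = μ + (0 : ZMod p) then omegaPow p (k * (n * j + n * μ)) else 0) = 0 := by
          intro n; rw [if_neg]; simpa using hμν
        simp_rw [hz]
        have hrhs : ¬ (μ = -j) ∨ ¬ (ν = -j) := by
          by_contra h
          push_neg at h
          exact hμν (h.2.trans h.1.symm)
        rcases hrhs with h | h <;> simp [h]
    · simp only [psi, apply_ite (fun z : ℂ => ‖z‖), norm_one, norm_zero]
      have : ∀ μ : ZMod p, (if μ = -j then (1:ℝ) else 0) ^ 2
          = if μ = -j then (1:ℝ) else 0 := by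
        intro μ; split <;> norm_num
      simp_rw [this]
      simp
  | some i =>
    set f : ZMod p → Heis p :=
      fun n => ⟨n, n * i, n * j + i * n * (n - 1) * (2 : ZMod p)⁻¹⟩ with hfdef
    have hf : ∀ a b, f (a + b) = f a * f b := by
      intro a b
      ext
      · show a + b = a + b; rfl
      · show (a + b) * i = a * i + b * i; ring
      · show (a + b) * j + i * (a + b) * ((a + b) - 1) * (2 : ZMod p)⁻¹
            = (a * j + i * a * (a - 1) * (2 : ZMod p)⁻¹)
              + (b * j + i * b * (b - 1) * (2 : ZMod p)⁻¹) + a * (b * i)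
        linear_combination (a * b * i) * h2
    have hf0 : f 0 = 1 := by ext <;> simp [hfdef, Heis.one_def]
    have hf1 : f 1 = ⟨1, i, j⟩ := by ext <;> simp [hfdef]
    have hset : (A p (some i) j : Set (Heis p)) = ↑(Finset.image f Finset.univ) := by
      rw [show A p (some i) j = Subgroup.zpowers (f 1) by rw [hf1]; rfl]
      exact zpowers_coe_eq_image f hf hf0
    have hinj : ∀ x ∈ Finset.univ, ∀ y ∈ Finset.univ, f x = f y → x = y := by
      intro x _ y _ h; simpa [hfdef] using congrArg Heis.x h
    rw [hset, finsum_mem_coe_finset, Finset.sum_image hinj]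
    have hsqrt : (((Real.sqrt p : ℝ)) : ℂ)⁻¹ * (((Real.sqrt p : ℝ)) : ℂ)⁻¹
        = (p : ℂ)⁻¹ := by
      rw [← mul_inv]
      congr 1
      norm_cast
      rw [Real.mul_self_sqrt (by positivity)]
    constructor
    · ext μ ν
      simp only [Matrix.smul_apply, Matrix.sum_apply, Matrix.of_apply, rho,
        hfdef, psi, smul_eq_mul]
      have hcond : ∀ n : ZMod p, (ν = μ + n) ↔ (n = ν - μ) := by
        intro n; constructor <;> intro h <;> subst h <;> ring
      simp_rw [hcond]
      rw [Finset.sum_ite_eq' Finset.univ (ν - μ)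
        (fun n => omegaPow p (k * (n * j + i * n * (n - 1) * (2 : ZMod p)⁻¹ + n * i * μ)))]
      simp only [Finset.mem_univ, if_pos]
      rw [map_mul, map_inv₀, Complex.conj_ofReal, conj_omegaPow, neg_neg]
      have harg : omegaPow p
            (k * ((ν - μ) * j + i * (ν - μ) * ((ν - μ) - 1) * (2 : ZMod p)⁻¹
              + (ν - μ) * i * μ))
          = omegaPow p (-(k * (μ * (μ - 1) * (2 : ZMod p)⁻¹ * i + μ * j)))
            * omegaPow p (k * (ν * (ν - 1) * (2 : ZMod p)⁻¹ * i + ν * j)) := by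
        rw [← omegaPow_add]
        congr 1
        linear_combination (-(k * i * μ * (ν - μ))) * h2
      rw [harg, ← hsqrt]
      ring
    · have habs : ∀ μ : ZMod p, ‖psi p k (some i) j μ‖ ^ 2 = (p : ℝ)⁻¹ := by
        intro μ
        simp only [psi, norm_mul, norm_inv, Complex.norm_real, Real.norm_eq_abs,
          abs_omegaPow, abs_of_nonneg (Real.sqrt_nonneg (p : ℝ)), mul_one]
        rw [inv_pow, Real.sq_sqrt (by positivity)]
      simp_rw [habs]
      rw [Finset.sum_const, Finset.card_univ, ZMod.card, nsmul_eq_mul,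
        mul_inv_cancel₀ hpR]
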